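/- Let α = 1/(2e) and consider the ODE y''(x) + a_1(x)·y'(x) + a_0(x)·y(x) = 0 on ℝ \ {0} with a_1(x) = -2α/x and a_0(x) = 1 + (α² + α)/x². Then lim_{x → 0} |x|·|a_1(x)| = 1/e and lim_{x → 0} |x|²·|a_0(x)| = (1/(2e))·(1 + 1/(2e)) < 1/e, yet this ODE admits a continuously differentiable solution y on ℝ with y(0) = y'(0) = 0 that is not identically zero on any neighborhood of 0, namely y(x) = |x|^α · sin|x|. Hence solutions with zero initial data at 0 are not unique in the class C¹ (equivalently, in the Hölder class C^{1,α}). -/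

import Mathlib

open Filter Topology

noncomputable def PWD (a : ℝ) : ℝ → ℝ :=
  fun x => (a * Real.sin |x| + |x| * Real.cos |x|) * |x| ^ a / x

lemma pw_rpow_split {s : ℝ} (hs : 0 < s) (a : ℝ) :
    s ^ a = s ^ (a - 1) * s ∧ s ^ (a - 1) = s ^ (a - 2) * s := by
  constructor
  · have := Real.rpow_add_one hs.ne' (a - 1)
    rwa [sub_add_cancel] at this
  · have := Real.rpow_add_one hs.ne' (a - 2)
    rw [show a - 2 + 1 = a - 1 by ring] at this
    exact this

lemma pw_key_alg (a s : ℝ) (hs : 0 < s) :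
    (a * (a - 1) * s ^ (a - 2) * Real.sin s + 2 * a * s ^ (a - 1) * Real.cos s
      - s ^ a * Real.sin s)
    + (-2 * a / s) * (a * Real.sin s * s ^ (a - 1) + Real.cos s * s ^ a)
    + (1 + (a ^ 2 + a) / s ^ 2) * (s ^ a * Real.sin s) = 0 := by
  obtain ⟨h1, h2⟩ := pw_rpow_split hs a
  rw [h1, h2]
  field_simp
  ring

lemma pw_hasDerivAt_base {s : ℝ} (hs : s ≠ 0) (a : ℝ) :
    HasDerivAt (fun t : ℝ => t ^ a * Real.sin t)
      (a * s ^ (a - 1) * Real.sin s + s ^ a * Real.cos s) s := by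
  have h := (Real.hasDerivAt_rpow_const (x := s) (p := a) (Or.inl hs)).mul
    (Real.hasDerivAt_sin s)
  exact h

lemma pw_hasDerivAt_pos {a x : ℝ} (hx : 0 < x) :
    HasDerivAt (fun t : ℝ => |t| ^ a * Real.sin |t|) (PWD a x) x := by
  have heq : (fun t : ℝ => |t| ^ a * Real.sin |t|) =ᶠ[𝓝 x]
      (fun t : ℝ => t ^ a * Real.sin t) := by
    filter_upwards [eventually_gt_nhds hx] with t ht
    rw [abs_of_pos ht]
  have h := (pw_hasDerivAt_base hx.ne' a).congr_of_eventuallyEq heq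
  refine h.congr_deriv ?_
  obtain ⟨h1, _⟩ := pw_rpow_split hx a
  rw [PWD, abs_of_pos hx, h1]
  field_simp

lemma pw_hasDerivAt_neg {a x : ℝ} (hx : x < 0) :
    HasDerivAt (fun t : ℝ => |t| ^ a * Real.sin |t|) (PWD a x) x := by
  have hs : 0 < -x := by linarith
  have heq : (fun t : ℝ => |t| ^ a * Real.sin |t|) =ᶠ[𝓝 x]
      ((fun t : ℝ => t ^ a * Real.sin t) ∘ (fun t => -t)) := by
    filter_upwards [eventually_lt_nhds hx] with t ht
    simp [Function.comp, abs_of_neg ht]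
  have h := ((pw_hasDerivAt_base hs.ne' a).comp x (hasDerivAt_neg x)).congr_of_eventuallyEq heq
  refine h.congr_deriv ?_
  obtain ⟨h1, _⟩ := pw_rpow_split hs a
  rw [PWD, abs_of_neg hx, h1]
  have hx' : x ≠ 0 := hx.ne
  field_simp

lemma pw_abs_rpow_tendsto {a : ℝ} (ha : 0 < a) :
    Tendsto (fun x : ℝ => |x| ^ a) (𝓝 0) (𝓝 0) := by
  have h1 : Tendsto (fun x : ℝ => |x|) (𝓝 0) (𝓝 0) :=
    continuous_abs.tendsto' 0 0 abs_zero
  have h2 : Tendsto (fun t : ℝ => t ^ a) (𝓝 0) (𝓝 0) := by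
    have := Real.continuousAt_rpow_const 0 a (Or.inr ha.le)
    rwa [ContinuousAt, Real.zero_rpow ha.ne'] at this
  exact h2.comp h1

lemma pw_hasDerivAt_zero {a : ℝ} (ha : 0 < a) :
    HasDerivAt (fun t : ℝ => |t| ^ a * Real.sin |t|) 0 0 := by
  rw [hasDerivAt_iff_tendsto_slope]
  apply squeeze_zero_norm (a := fun x : ℝ => |x| ^ a)
  · intro x
    rcases eq_or_ne x 0 with rfl | hx
    · simp [slope, Real.zero_rpow ha.ne']
    · have h0 : slope (fun t : ℝ => |t| ^ a * Real.sin |t|) 0 x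
          = |x| ^ a * Real.sin |x| / x := by
        rw [slope_def_field]
        simp [Real.zero_rpow ha.ne']
      rw [Real.norm_eq_abs, h0, abs_div, abs_mul]
      have h1 : abs (Real.sin |x|) ≤ |x| := by
        simpa using Real.abs_sin_le_abs (x := |x|)
      have h2 : (0:ℝ) ≤ |x| ^ a := Real.rpow_nonneg (abs_nonneg x) a
      have hxp : 0 < |x| := abs_pos.mpr hx
      rw [abs_of_nonneg h2, div_le_iff₀ hxp]
      exact mul_le_mul_of_nonneg_left h1 h2
  · exact (pw_abs_rpow_tendsto ha).mono_left nhdsWithin_le_nhds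

lemma pw_cont_D {a : ℝ} (ha : 0 < a) : Continuous (PWD a) := by
  rw [continuous_iff_continuousAt]
  intro x
  rcases eq_or_ne x 0 with rfl | hx
  · have h0 : PWD a 0 = 0 := by simp [PWD]
    rw [ContinuousAt, h0]
    apply squeeze_zero_norm (a := fun x : ℝ => (a + 1) * |x| ^ a)
    · intro x
      rcases eq_or_ne x 0 with rfl | hx
      · simp [PWD, Real.zero_rpow ha.ne']
      · have hxp : 0 < |x| := abs_pos.mpr hx
        have h2 : (0:ℝ) ≤ |x| ^ a := Real.rpow_nonneg (abs_nonneg x) a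
        have hs : abs (Real.sin |x|) ≤ |x| := by
          simpa using Real.abs_sin_le_abs (x := |x|)
        have hc : abs (Real.cos |x|) ≤ 1 := Real.abs_cos_le_one _
        have hb : abs (a * Real.sin |x| + |x| * Real.cos |x|) ≤ (a + 1) * |x| := by
          calc abs (a * Real.sin |x| + |x| * Real.cos |x|)
              ≤ abs (a * Real.sin |x|) + abs (|x| * Real.cos |x|) := abs_add_le _ _
            _ ≤ a * |x| + |x| * 1 := by
                rw [abs_mul, abs_mul, abs_of_nonneg ha.le, abs_abs]
                exact add_le_add (mul_le_mul_of_nonneg_left hs ha.le)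
                  (mul_le_mul_of_nonneg_left hc (abs_nonneg x))
            _ = (a + 1) * |x| := by ring
        rw [Real.norm_eq_abs, PWD]
        rw [abs_div, abs_mul, abs_of_nonneg h2, div_le_iff₀ hxp]
        calc abs (a * Real.sin |x| + |x| * Real.cos |x|) * |x| ^ a
            ≤ ((a + 1) * |x|) * |x| ^ a := mul_le_mul_of_nonneg_right hb h2
          _ = (a + 1) * |x| ^ a * |x| := by ring
    · simpa using (pw_abs_rpow_tendsto ha).const_mul (a + 1)
  · have habs : ContinuousAt (fun t : ℝ => |t|) x := continuous_abs.continuousAt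
    have h1 : ContinuousAt (fun t : ℝ => |t| ^ a) x := habs.rpow_const (Or.inr ha.le)
    have h2 : ContinuousAt (fun t : ℝ => Real.sin |t|) x :=
      Real.continuous_sin.continuousAt.comp habs
    have h3 : ContinuousAt (fun t : ℝ => Real.cos |t|) x :=
      Real.continuous_cos.continuousAt.comp habs
    exact (((continuousAt_const.mul h2).add (habs.mul h3)).mul h1).div continuousAt_id hx

noncomputable def PWE (a : ℝ) (s : ℝ) : ℝ :=
  a * (a - 1) * s ^ (a - 2) * Real.sin s + 2 * a * s ^ (a - 1) * Real.cos s
    - s ^ a * Real.sin s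

noncomputable def PWh (a : ℝ) (s : ℝ) : ℝ :=
  a * Real.sin s * s ^ (a - 1) + Real.cos s * s ^ a

lemma pw_D_eq_pos {a t : ℝ} (ht : 0 < t) : PWD a t = PWh a t := by
  obtain ⟨h1, _⟩ := pw_rpow_split ht a
  rw [PWD, PWh, abs_of_pos ht, h1]
  field_simp

lemma pw_D_eq_neg {a t : ℝ} (ht : t < 0) : PWD a t = -PWh a (-t) := by
  have hs : 0 < -t := by linarith
  obtain ⟨h1, _⟩ := pw_rpow_split hs a
  rw [PWD, PWh, abs_of_neg ht, h1]
  have ht' : t ≠ 0 := ht.ne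
  field_simp

lemma pw_h_hasDerivAt {a s : ℝ} (hs : s ≠ 0) :
    HasDerivAt (PWh a) (PWE a s) s := by
  have d1 : HasDerivAt (fun u : ℝ => u ^ (a - 1)) ((a - 1) * s ^ (a - 2)) s := by
    have := Real.hasDerivAt_rpow_const (x := s) (p := a - 1) (Or.inl hs)
    rwa [show a - 1 - 1 = a - 2 by ring] at this
  have d2 : HasDerivAt (fun u : ℝ => u ^ a) (a * s ^ (a - 1)) s :=
    Real.hasDerivAt_rpow_const (x := s) (p := a) (Or.inl hs)
  have h1 : HasDerivAt (fun u : ℝ => a * Real.sin u * u ^ (a - 1))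
      ((a * Real.cos s) * s ^ (a - 1) + (a * Real.sin s) * ((a - 1) * s ^ (a - 2))) s :=
    ((Real.hasDerivAt_sin s).const_mul a).mul d1
  have h2 : HasDerivAt (fun u : ℝ => Real.cos u * u ^ a)
      ((-Real.sin s) * s ^ a + Real.cos s * (a * s ^ (a - 1))) s :=
    (Real.hasDerivAt_cos s).mul d2
  have h := h1.add h2
  refine h.congr_deriv ?_
  rw [PWE]
  ring

lemma pw_hasDerivAt_D_pos {a x : ℝ} (hx : 0 < x) :
    HasDerivAt (PWD a) (PWE a x) x := by
  have heq : PWD a =ᶠ[𝓝 x] PWh a := by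
    filter_upwards [eventually_gt_nhds hx] with t ht
    exact pw_D_eq_pos ht
  exact (pw_h_hasDerivAt hx.ne').congr_of_eventuallyEq heq

lemma pw_hasDerivAt_D_neg {a x : ℝ} (hx : x < 0) :
    HasDerivAt (PWD a) (PWE a (-x)) x := by
  have hs : (0:ℝ) < -x := by linarith
  have heq : PWD a =ᶠ[𝓝 x] (fun t => -PWh a (-t)) := by
    filter_upwards [eventually_lt_nhds hx] with t ht
    exact pw_D_eq_neg ht
  have h := (((pw_h_hasDerivAt (a := a) hs.ne').comp x (hasDerivAt_neg x)).neg)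
  have h' : HasDerivAt (fun t => -PWh a (-t)) (PWE a (-x)) x := by
    refine h.congr_deriv ?_
    ring
  exact h'.congr_of_eventuallyEq heq

/-- Example 4 with `α = 1/(2e)` (Pan–Wang): the coefficient limits of the ODE
`y'' - (2α/x) y' + (1 + (α²+α)/x²) y = 0` satisfy the bound `≤ 1/e` of Theorem 1,
yet `y(x) = |x|^α sin|x|` is a `C¹` (not `C^∞`) solution with zero initial data which is
not identically zero near `0`: uniqueness fails in the class `C¹`. -/
theorem example_e_bound_nonuniqueness
    (e α : ℝ) (he : e = Real.exp 1) (hα : α = 1 / (2 * e))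
    (a1 a0 y : ℝ → ℝ)
    (ha1 : ∀ x : ℝ, a1 x = -2 * α / x)
    (ha0 : ∀ x : ℝ, a0 x = 1 + (α ^ 2 + α) / x ^ 2)
    (hy : ∀ x : ℝ, y x = |x| ^ α * Real.sin |x|) :
    Filter.Tendsto (fun x : ℝ => |x| * |a1 x|) (𝓝[≠] (0 : ℝ)) (𝓝 (1 / e)) ∧
    Filter.Tendsto (fun x : ℝ => |x| ^ 2 * |a0 x|) (𝓝[≠] (0 : ℝ))
      (𝓝 ((1 / (2 * e)) * (1 + 1 / (2 * e)))) ∧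
    (1 / (2 * e)) * (1 + 1 / (2 * e)) < 1 / e ∧
    ContDiff ℝ 1 y ∧ y 0 = 0 ∧ deriv y 0 = 0 ∧
    (∀ x : ℝ, x ≠ 0 → deriv (deriv y) x + a1 x * deriv y x + a0 x * y x = 0) ∧
    (∀ δ > (0 : ℝ), ∃ x ∈ Set.Icc (-δ) δ, y x ≠ 0) := by
  have he1 : (0:ℝ) < e := he ▸ Real.exp_pos 1
  have he2 : (2:ℝ) ≤ e := by
    have := Real.add_one_le_exp 1
    rw [← he] at this; linarith
  have hα0 : (0:ℝ) < α := by rw [hα]; positivity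
  have hyf : y = fun x : ℝ => |x| ^ α * Real.sin |x| := funext hy
  subst hyf
  have hD0 : PWD α 0 = 0 := by simp [PWD]
  have hall : ∀ x : ℝ, HasDerivAt (fun t : ℝ => |t| ^ α * Real.sin |t|) (PWD α x) x := by
    intro x
    rcases lt_trichotomy x 0 with h | rfl | h
    · exact pw_hasDerivAt_neg h
    · rw [hD0]; exact pw_hasDerivAt_zero hα0
    · exact pw_hasDerivAt_pos h
  have hderiv : deriv (fun t : ℝ => |t| ^ α * Real.sin |t|) = PWD α :=
    funext fun x => (hall x).deriv
  refine ⟨?_, ?_, ?_, ?_, ?_, ?_, ?_, ?_⟩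
  · -- limit of |x| * |a1 x|
    have h2α : 2 * α = 1 / e := by rw [hα]; field_simp
    refine Filter.Tendsto.congr' ?_ (tendsto_const_nhds (x := (1/e : ℝ)))
    refine Filter.eventuallyEq_of_mem self_mem_nhdsWithin fun x hx => ?_
    have hx' : (x:ℝ) ≠ 0 := hx
    have hax : |x| ≠ 0 := abs_ne_zero.mpr hx'
    have h3 : |x| * |a1 x| = 2 * α := by
      rw [ha1, abs_div, abs_mul, abs_of_nonneg hα0.le, show |(-2:ℝ)| = 2 by norm_num]
      field_simp
      try ring
    rw [h3, h2α]
  · -- limit of |x|^2 * |a0 x|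
    have hc : (1 / (2 * e)) * (1 + 1 / (2 * e)) = α ^ 2 + α := by rw [hα]; ring
    rw [hc]
    have hbase : Filter.Tendsto (fun x : ℝ => x ^ 2 + (α ^ 2 + α)) (𝓝 0) (𝓝 (α ^ 2 + α)) := by
      have : Continuous fun x : ℝ => x ^ 2 + (α ^ 2 + α) := by continuity
      simpa using this.tendsto 0
    refine Filter.Tendsto.congr' ?_ (hbase.mono_left nhdsWithin_le_nhds)
    refine Filter.eventuallyEq_of_mem self_mem_nhdsWithin fun x hx => ?_
    have hx' : (x:ℝ) ≠ 0 := hx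
    have h1 : x ^ 2 + (α ^ 2 + α) = |x| ^ 2 * |a0 x| := by
      rw [ha0, sq_abs,
        show x ^ 2 * |1 + (α ^ 2 + α) / x ^ 2| = |x ^ 2 * (1 + (α ^ 2 + α) / x ^ 2)| by
          rw [abs_mul, abs_of_nonneg (sq_nonneg x)],
        show x ^ 2 * (1 + (α ^ 2 + α) / x ^ 2) = x ^ 2 + (α ^ 2 + α) by field_simp,
        abs_of_nonneg (by nlinarith [sq_nonneg x, sq_nonneg α])]
    exact h1
  · -- the strict inequality
    have h4 : (1 / (2 * e)) * (1 + 1 / (2 * e)) = (2 * e + 1) / (4 * e ^ 2) := by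
      rw [eq_div_iff (by positivity)]
      field_simp
      norm_num
    rw [h4, div_lt_div_iff₀ (by positivity) he1]
    nlinarith
  · -- C¹
    exact contDiff_one_iff_deriv.mpr
      ⟨fun x => (hall x).differentiableAt, hderiv ▸ pw_cont_D hα0⟩
  · simp [Real.zero_rpow hα0.ne']
  · rw [hderiv]; exact hD0
  · -- the ODE
    intro x hx
    rw [hderiv]
    rcases hx.lt_or_gt with h | h
    · rw [(pw_hasDerivAt_D_neg h).deriv, pw_D_eq_neg h, ha1, ha0, hy x, abs_of_neg h]
      have key := pw_key_alg α (-x) (by linarith)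
      rw [PWE, PWh] at *
      linear_combination key
    · rw [(pw_hasDerivAt_D_pos h).deriv, pw_D_eq_pos h, ha1, ha0, hy x, abs_of_pos h]
      have key := pw_key_alg α x h
      rw [PWE, PWh] at *
      linear_combination key
  · -- nontriviality
    intro δ hδ
    refine ⟨min δ 1, ⟨by constructor <;> [linarith [lt_min hδ one_pos]; exact min_le_left _ _], ?_⟩⟩
    have hx0 : 0 < min δ 1 := lt_min hδ one_pos
    have hxpi : min δ 1 < Real.pi := by
      have := Real.pi_gt_three
      have h1 : min δ 1 ≤ 1 := min_le_right _ _
      linarith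
    have : 0 < |min δ 1| ^ α * Real.sin |min δ 1| := by
      rw [abs_of_pos hx0]
      exact mul_pos (Real.rpow_pos_of_pos hx0 α) (Real.sin_pos_of_pos_of_lt_pi hx0 hxpi)
    exact this.ne'
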